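/- arXiv:1608.00654 — 2 statements merged into one kernel-verified Lean document; each statement's English description precedes it below -/
import Mathlib

section
/- For any k1, k2, ℓ1, ℓ2 ∈ ℕ ∪ {ω} with (ℓ1,ℓ2) ≰ (k1,k2) (pointwise), there exist Büchi automata 𝒜 and ℬ over some alphabet Σ with a distribution function σ such that 𝒜 ⊑(ℓ1,ℓ2) ℬ but not 𝒜 ⊑(k1,k2) ℬ. -/
open scoped Classical

/-- A Büchi automaton over alphabet `S`. -/
structure BA (S : Type) where
  Q : Type
  init : Q
  trans : Q → S → Q → Prop
  acc : Q → Prop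

/-- The Büchi language of `A`: infinite words with a run from the initial state
visiting accepting states infinitely often. -/
def BA.Lang {S : Type} (A : BA S) : Set (ℕ → S) :=
  { w | ∃ ρ : ℕ → A.Q, ρ 0 = A.init ∧ (∀ n, A.trans (ρ n) (w n) (ρ (n+1))) ∧
        ∀ n, ∃ m, n ≤ m ∧ A.acc (ρ m) }

/-- A configuration of the two-buffer simulation game: Spoiler's state, contents of
the two FIFO buffers (head = oldest letter), Duplicator's state. -/
structure Cfg {S : Type} (A B : BA S) where
  qa : A.Q
  b1 : List S
  b2 : List S
  qb : B.Q

/-- The configuration after Spoiler's move `m = (a, q')`: his state becomes `q'` and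
the letter `a` is appended to buffer `σ a` (`true` = buffer 1, `false` = buffer 2). -/
def midCfg {S : Type} {A B : BA S} (σ : S → Bool) (c : Cfg A B) (m : S × A.Q) : Cfg A B :=
  ⟨m.2, if σ m.1 then c.b1 ++ [m.1] else c.b1, if σ m.1 then c.b2 else c.b2 ++ [m.1], c.qb⟩

/-- Applying a finite sequence of Duplicator consumption steps: each step picks a buffer
(`true` = buffer 1) and a successor state, consuming the oldest letter of that buffer
along a matching transition of `B`.  Returns `none` if some step is illegal. -/
noncomputable def dupApply {S : Type} (A B : BA S) :
    Cfg A B → List (Bool × B.Q) → Option (Cfg A B)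
  | c, [] => some c
  | c, (j, p') :: ms =>
    if j then
      match c.b1 with
      | [] => none
      | b :: β => if B.trans c.qb b p' then dupApply A B ⟨c.qa, β, c.b2, p'⟩ ms else none
    else
      match c.b2 with
      | [] => none
      | b :: β => if B.trans c.qb b p' then dupApply A B ⟨c.qa, c.b1, β, p'⟩ ms else none

/-- The configuration at the start of round `n` (i.e. after Duplicator's moves of
round `n-1`), given Spoiler's moves `sp` and Duplicator's responses `dm`;
`none` once an illegal move has occurred. -/
noncomputable def playCfg {S : Type} (A B : BA S) (σ : S → Bool)
    (sp : ℕ → S × A.Q) (dm : ℕ → List (Bool × B.Q)) : ℕ → Option (Cfg A B)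
  | 0 => some ⟨A.init, [], [], B.init⟩
  | n+1 =>
    match playCfg A B σ sp dm n with
    | none => none
    | some c =>
      if A.trans c.qa (sp n).1 (sp n).2 then dupApply A B (midCfg σ c (sp n)) (dm n) else none

/-- Number of letters put into buffer `j` by Spoiler during the first `n` rounds. -/
noncomputable def pushed {S : Type} {QA : Type} (σ : S → Bool) (sp : ℕ → S × QA)
    (j : Bool) (n : ℕ) : ℕ :=
  ((Finset.range n).filter fun i => σ (sp i).1 = j).card

/-- Number of letters consumed from buffer `j` by Duplicator during the first `n` rounds. -/
noncomputable def consumed {QB : Type} (dm : ℕ → List (Bool × QB)) (j : Bool) (n : ℕ) : ℕ :=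
  ∑ i ∈ Finset.range n, ((dm i).filter fun x => x.1 = j).length

/-- Duplicator's strategy is consistent with the moves `dm` of a play. -/
def Consistent {S : Type} (A B : BA S)
    (dstrat : List ((S × A.Q) × List (Bool × B.Q)) → (S × A.Q) → List (Bool × B.Q))
    (sp : ℕ → S × A.Q) (dm : ℕ → List (Bool × B.Q)) : Prop :=
  ∀ n, dm n = dstrat (List.ofFn fun i : Fin n => (sp i, dm i)) (sp n)

/-- Spoiler's moves are legal as long as the play is defined. -/
def SpLegal {S : Type} (A B : BA S) (σ : S → Bool)
    (sp : ℕ → S × A.Q) (dm : ℕ → List (Bool × B.Q)) : Prop :=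
  ∀ n c, playCfg A B σ sp dm n = some c → A.trans c.qa (sp n).1 (sp n).2

/-- Duplicator's winning condition for a play of the two-buffer game with
capacities `(k1, k2)`: the buffers never exceed their capacities (checked after her
moves), and either Spoiler's run visits accepting states only finitely often, or
every letter put into a buffer is eventually consumed and Duplicator's run visits
accepting states infinitely often. -/
def Win2 {S : Type} (A B : BA S) (σ : S → Bool) (k1 k2 : ℕ∞)
    (sp : ℕ → S × A.Q) (dm : ℕ → List (Bool × B.Q)) : Prop :=
  (∀ n c, playCfg A B σ sp dm n = some c →
      (c.b1.length : ℕ∞) ≤ k1 ∧ (c.b2.length : ℕ∞) ≤ k2) ∧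
  ((∃ N, ∀ n, N ≤ n → ¬ A.acc (sp n).2) ∨
    ((∀ n j, ∃ m, pushed σ sp j n ≤ consumed dm j m) ∧
     (∀ n, ∃ m, n ≤ m ∧ ∃ x ∈ dm m, B.acc x.2)))

/-- `dstrat` is a winning strategy for Duplicator in the two-buffer simulation game on
`A`, `B` with letter distribution `σ` and capacities `(k1, k2)`: against every legal
behaviour of Spoiler, all of Duplicator's prescribed moves are legal (the play never
breaks) and the resulting play is won by Duplicator. -/
def WinningStrat2 {S : Type} (A B : BA S) (σ : S → Bool) (k1 k2 : ℕ∞)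
    (dstrat : List ((S × A.Q) × List (Bool × B.Q)) → (S × A.Q) → List (Bool × B.Q)) : Prop :=
  ∀ sp dm, Consistent A B dstrat sp dm → SpLegal A B σ sp dm →
    (∀ n, (playCfg A B σ sp dm n).isSome) ∧ Win2 A B σ k1 k2 sp dm

/-- Two-buffer simulation `A ⊑(k1,k2) B`: Duplicator has a winning strategy. -/
def Sim2 {S : Type} (A B : BA S) (σ : S → Bool) (k1 k2 : ℕ∞) : Prop :=
  ∃ dstrat, WinningStrat2 A B σ k1 k2 dstrat

/-! ### Construction -/

namespace TB

/-- State space of the witnessing automaton `B`. -/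
abbrev Q := (ℕ × Bool) ⊕ Unit

/-- Transition relation of `B`: a chain `(0,·) → (1,g) → ⋯ → (n,g)` on arbitrary
letters (guess `g` committed at the first step), then `(n,g) → f` only on letter `g`,
and a self-loop at the final state `f`. -/
def Btrans (n : ℕ) : Q → Bool → Q → Prop
  | .inl p, _, .inl p' => p'.1 = p.1 + 1 ∧ p'.1 ≤ n ∧ (p.1 = 0 ∨ p'.2 = p.2)
  | .inl p, c, .inr _ => p.1 = n ∧ c = p.2
  | .inr _, _, .inr _ => True
  | .inr _, _, .inl _ => False

abbrev AA : BA Bool := ⟨Unit, (), fun _ _ _ => True, fun _ => True⟩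

abbrev BB (n : ℕ) : BA Bool := ⟨Q, .inl (0, true), Btrans n, fun q => q = .inr ()⟩

/-- All letters go to buffer `j`. -/
def sig (j : Bool) : Bool → Bool := fun _ => j

/-- The configuration with Duplicator state `q` and buffer `j` holding `ls`
(the other buffer empty). -/
def mk (n : ℕ) (j : Bool) (ls : List Bool) (q : Q) : Cfg AA (BB n) :=
  ⟨(), if j then ls else [], if j then [] else ls, q⟩

lemma mk_qb (n j ls q) : (mk n j ls q).qb = q := rfl

lemma mk_bufj (n : ℕ) (j : Bool) (ls : List Bool) (q : Q) : (if j then (mk n j ls q).b1 else (mk n j ls q).b2) = ls := by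
  cases j <;> rfl

lemma mk_bufo (n : ℕ) (j : Bool) (ls : List Bool) (q : Q) : (if j then (mk n j ls q).b2 else (mk n j ls q).b1) = [] := by
  cases j <;> rfl

lemma mid (n j ls q) (m : Bool × Unit) :
    midCfg (sig j) (mk n j ls q) m = mk n j (ls ++ [m.1]) q := by
  obtain ⟨a, u⟩ := m; cases u; cases j <;> simp [midCfg, mk, sig]

lemma dup_nil (n j ls q) : dupApply AA (BB n) (mk n j ls q) [] = some (mk n j ls q) := rfl

lemma dup_other (n : ℕ) (j b : Bool) (hb : b ≠ j) (ls q p L) :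
    dupApply AA (BB n) (mk n j ls q) ((b, p) :: L) = none := by
  cases j <;> cases b <;> simp_all [dupApply, mk]

lemma dup_nilbuf (n j q p L) : dupApply AA (BB n) (mk n j [] q) ((j, p) :: L) = none := by
  cases j <;> simp [dupApply, mk]

lemma dup_cons_pos (n j x xs q p L) (htr : (BB n).trans q x p) :
    dupApply AA (BB n) (mk n j (x :: xs) q) ((j, p) :: L)
      = dupApply AA (BB n) (mk n j xs p) L := by
  cases j <;> simp [dupApply, mk, show Btrans n q x p from htr]

lemma dup_cons_neg (n j x xs q p L) (htr : ¬ (BB n).trans q x p) :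
    dupApply AA (BB n) (mk n j (x :: xs) q) ((j, p) :: L) = none := by
  cases j <;> simp [dupApply, mk, show ¬ Btrans n q x p from htr]

lemma play_zero (n j sp dm) : playCfg AA (BB n) (sig j) sp dm 0 = some (mk n j [] (.inl (0, true))) := by
  cases j <;> simp [playCfg, mk, AA, BB]

lemma play_succ (n j sp dm t c) (h : playCfg AA (BB n) (sig j) sp dm t = some c) :
    playCfg AA (BB n) (sig j) sp dm (t+1)
      = dupApply AA (BB n) (midCfg (sig j) c (sp t)) (dm t) := by
  simp only [playCfg, h]
  exact if_pos (show AA.trans c.qa (sp t).1 (sp t).2 from trivial)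

lemma play_none (n j sp dm t) (h : playCfg AA (BB n) (sig j) sp dm t = none) :
    playCfg AA (BB n) (sig j) sp dm (t+1) = none := by
  simp [playCfg, h]

lemma consumed_zero (dm : ℕ → List (Bool × Q)) (j : Bool) : consumed dm j 0 = 0 := by
  simp [consumed]

lemma consumed_succ (dm : ℕ → List (Bool × Q)) (j : Bool) (t : ℕ) :
    consumed dm j (t+1) = consumed dm j t + ((dm t).filter fun x => x.1 = j).length := by
  simp [consumed, Finset.sum_range_succ]

lemma consumed_mono (dm : ℕ → List (Bool × Q)) (j : Bool) {s t : ℕ} (h : s ≤ t) :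
    consumed dm j s ≤ consumed dm j t := by
  unfold consumed
  exact Finset.sum_le_sum_of_subset (Finset.range_subset_range.2 h)

lemma pushed_const (j : Bool) (sp : ℕ → Bool × Unit) (t : ℕ) :
    pushed (sig j) sp j t = t := by
  simp [pushed, sig]

lemma pushed_other (j j' : Bool) (hj : j' ≠ j) (sp : ℕ → Bool × Unit) (t : ℕ) :
    pushed (sig j) sp j' t = 0 := by
  have : Finset.filter (fun i => sig j (sp i).1 = j') (Finset.range t) = ∅ :=
    Finset.filter_false_of_mem (fun i _ => by simpa [sig] using Ne.symm hj)
  simp [pushed, this]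

/-! ### The positive direction -/

/-- Duplicator's consumption moves climbing from state `n - r` up to the final state,
with guess `g`. -/
def climb (j : Bool) (n : ℕ) (g : Bool) : ℕ → List (Bool × Q)
  | 0 => [(j, Sum.inr ())]
  | r+1 => (j, Sum.inl (n - r, g)) :: climb j n g r

lemma climb_length (j n g) : ∀ r, (climb j n g r).length = r + 1
  | 0 => rfl
  | r+1 => by simp [climb, climb_length j n g r]

lemma climb_fst (j n g) : ∀ r, ∀ x ∈ climb j n g r, x.1 = j
  | 0 => by simp [climb]
  | r+1 => by
    intro x hx
    rcases List.mem_cons.1 hx with h | h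
    · simp [h]
    · exact climb_fst j n g r x h

lemma climb_spec (j : Bool) (n : ℕ) (g : Bool) :
    ∀ (r m : ℕ) (ws : List Bool), m + r = n → 1 ≤ m → ws.length = r →
      dupApply AA (BB n) (mk n j (ws ++ [g]) (.inl (m, g))) (climb j n g r)
        = some (mk n j [] (.inr ())) := by
  intro r
  induction r with
  | zero =>
    intro m ws hm _ hws
    rw [List.length_eq_zero_iff] at hws
    subst hws
    have hmn : m = n := by omega
    subst hmn
    rw [climb, List.nil_append]
    rw [dup_cons_pos _ _ _ _ _ _ _ (by exact ⟨rfl, rfl⟩ : (BB m).trans (.inl (m, g)) g (.inr ()))]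
    exact dup_nil _ _ _ _
  | succ r ih =>
    intro m ws hm h1 hws
    rcases ws with _ | ⟨x, ws'⟩
    · simp at hws
    rw [climb]
    have htr : (BB n).trans (.inl (m, g)) x (.inl (n - r, g)) := by
      refine ⟨by omega, by omega, Or.inr rfl⟩
    rw [List.cons_append, dup_cons_pos _ _ _ _ _ _ _ htr]
    have : n - r = m + 1 := by omega
    rw [this]
    exact ih (m+1) ws' (by omega) (by omega) (by simpa using hws)

lemma climb_top (j : Bool) (n : ℕ) (hn : 1 ≤ n) (g h0 : Bool) (ws : List Bool)
    (hws : ws.length = n) :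
    dupApply AA (BB n) (mk n j (ws ++ [g]) (.inl (0, h0))) (climb j n g n)
      = some (mk n j [] (.inr ())) := by
  obtain ⟨r, rfl⟩ : ∃ r, n = r + 1 := ⟨n - 1, by omega⟩
  rcases ws with _ | ⟨x, ws'⟩
  · simp at hws
  rw [climb]
  have htr : (BB (r+1)).trans (.inl (0, h0)) x (.inl (r + 1 - r, g)) := by
    refine ⟨by omega, by omega, Or.inl rfl⟩
  rw [List.cons_append, dup_cons_pos _ _ _ _ _ _ _ htr]
  have : r + 1 - r = 1 := by omega
  rw [this]
  exact climb_spec j (r+1) g r 1 ws' (by omega) le_rfl (by simpa using hws)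

/-- The positive strategy: wait `n` rounds, then consume everything guessing that the
currently-played letter (which is the `(n+1)`-st) closes the cycle; afterwards consume
each letter immediately at the final state. -/
def dstratP (n : ℕ) (j : Bool) :
    List ((Bool × Unit) × List (Bool × Q)) → (Bool × Unit) → List (Bool × Q) :=
  fun hist m =>
    if hist.length < n then [] else if hist.length = n then climb j n m.1 n
    else [(j, Sum.inr ())]

lemma pos (n : ℕ) (hn : 1 ≤ n) (j : Bool) (c1 c2 : ℕ∞)
    (hc : (n : ℕ∞) ≤ if j then c1 else c2) :
    Sim2 AA (BB n) (sig j) c1 c2 := by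
  refine ⟨dstratP n j, fun sp dm hcons _ => ?_⟩
  have hdm : ∀ t, dm t = if t < n then [] else if t = n then climb j n (sp t).1 n
      else [(j, Sum.inr ())] := by
    intro t
    rw [hcons t]
    simp [dstratP]
  set w : ℕ → Bool := fun r => (sp r).1 with hw
  have pp1 : ∀ t, t ≤ n → playCfg AA (BB n) (sig j) sp dm t
      = some (mk n j ((List.range t).map w) (.inl (0, true))) := by
    intro t
    induction t with
    | zero => intro _; simpa using play_zero n j sp dm
    | succ t ih =>
      intro ht
      rw [play_succ _ _ _ _ _ _ (ih (by omega)), mid, hdm t, if_pos (by omega : t < n)]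
      rw [List.range_succ, List.map_append]
      exact dup_nil _ _ _ _
  have pp2 : playCfg AA (BB n) (sig j) sp dm (n+1) = some (mk n j [] (.inr ())) := by
    rw [play_succ _ _ _ _ _ _ (pp1 n le_rfl), mid, hdm n]
    rw [if_neg (by omega), if_pos rfl]
    exact climb_top j n hn (sp n).1 true _ (by simp)
  have pp3 : ∀ s, playCfg AA (BB n) (sig j) sp dm (n+1+s) = some (mk n j [] (.inr ())) := by
    intro s
    induction s with
    | zero => exact pp2
    | succ s ih =>
      rw [show n+1+(s+1) = (n+1+s)+1 by omega, play_succ _ _ _ _ _ _ ih, mid,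
        hdm (n+1+s), if_neg (by omega), if_neg (by omega)]
      rw [show ([] : List Bool) ++ [(sp (n+1+s)).1] = [(sp (n+1+s)).1] by simp]
      rw [dup_cons_pos _ _ _ _ _ _ _ (by exact trivial : (BB n).trans (.inr ()) _ (.inr ()))]
      exact dup_nil _ _ _ _
  have hform : ∀ t, ∃ ls q, playCfg AA (BB n) (sig j) sp dm t = some (mk n j ls q)
      ∧ ls.length ≤ n := by
    intro t
    rcases le_or_gt t n with ht | ht
    · exact ⟨_, _, pp1 t ht, by simpa using ht⟩
    · obtain ⟨s, rfl⟩ : ∃ s, t = n+1+s := ⟨t - (n+1), by omega⟩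
      exact ⟨_, _, pp3 s, by simp⟩
  constructor
  · intro t
    obtain ⟨ls, q, hpt, _⟩ := hform t
    simp [hpt]
  constructor
  · intro t c hc'
    obtain ⟨ls, q, hpt, hlen⟩ := hform t
    rw [hpt] at hc'
    obtain rfl : mk n j ls q = c := by injection hc'
    have hls : (ls.length : ℕ∞) ≤ if j then c1 else c2 :=
      le_trans (by exact_mod_cast hlen) hc
    cases j with
    | false =>
      refine ⟨?_, ?_⟩
      · show (([] : List Bool).length : ℕ∞) ≤ c1
        simp
      · show ((ls.length : ℕ∞)) ≤ c2
        simpa using hls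
    | true =>
      refine ⟨?_, ?_⟩
      · show ((ls.length : ℕ∞)) ≤ c1
        simpa using hls
      · show (([] : List Bool).length : ℕ∞) ≤ c2
        simp
  refine Or.inr ⟨?_, ?_⟩
  · -- drainage
    have hcount : ∀ s, consumed dm j (n+1+s) = n+1+s := by
      intro s
      induction s with
      | zero =>
        rw [show n+1+0 = n+1 by omega, consumed_succ]
        have h0 : consumed dm j n = 0 := by
          unfold consumed
          refine Finset.sum_eq_zero fun i hi => ?_
          rw [hdm i, if_pos (Finset.mem_range.1 hi)]
          simp
        rw [h0, hdm n, if_neg (by omega), if_pos rfl]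
        have : ∀ x ∈ climb j n (sp n).1 n, x.1 = j := climb_fst j n (sp n).1 n
        rw [List.filter_eq_self.2 (fun x hx => by simp [this x hx])]
        rw [climb_length]
        omega
      | succ s ih =>
        rw [show n+1+(s+1) = (n+1+s)+1 by omega, consumed_succ, ih,
          hdm (n+1+s), if_neg (by omega), if_neg (by omega)]
        simp
    intro t j'
    by_cases hj : j' = j
    · subst hj
      refine ⟨n+1+t, ?_⟩
      calc pushed (sig j') sp j' t ≤ t := by
            rw [pushed_const]
        _ ≤ consumed dm j' (n+1+t) := by rw [hcount]; omega
    · refine ⟨0, ?_⟩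
      rw [pushed_other j j' hj, consumed_zero]
  · intro t
    refine ⟨n+1+t, by omega, (j, Sum.inr ()), ?_, rfl⟩
    rw [hdm (n+1+t), if_neg (by omega), if_neg (by omega)]
    simp

/-! ### The negative direction -/

/-- `q` lies at "height" `k`, i.e. reaching `q` takes exactly `k` consumptions
(at least `n+1` for the final state). -/
def stp (n : ℕ) : Q → ℕ → Prop
  | .inl p, k => p.1 = k
  | .inr _, k => n + 1 ≤ k

lemma dup_gen (n : ℕ) (j : Bool) (w : ℕ → Bool) :
    ∀ (L : List (Bool × Q)) (T m : ℕ) (q : Q) (c' : Cfg AA (BB n)),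
      m ≤ T → stp n q m →
      dupApply AA (BB n) (mk n j (((List.range T).map w).drop m) q) L = some c' →
      ∃ m' q', m ≤ m' ∧ m' ≤ T ∧ stp n q' m'
        ∧ m' = m + (L.filter (fun x => x.1 = j)).length
        ∧ c' = mk n j (((List.range T).map w).drop m') q' := by
  intro L
  induction L with
  | nil =>
    intro T m q c' hmT hq hda
    rw [dup_nil] at hda
    exact ⟨m, q, le_rfl, hmT, hq, by simp, (Option.some_injective _ hda).symm⟩
  | cons bp L ih =>
    intro T m q c' hmT hq hda
    obtain ⟨b, p⟩ := bp
    by_cases hb : b = j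
    · subst hb
      rcases eq_or_lt_of_le hmT with rfl | hlt
      · rw [List.drop_eq_nil_of_le (by simp), dup_nilbuf] at hda
        exact absurd hda (by simp)
      · have hdrop : (((List.range T).map w).drop m)
            = w m :: (((List.range T).map w).drop (m+1)) := by
          rw [List.drop_eq_getElem_cons (by simpa using hlt)]
          simp
        rw [hdrop] at hda
        by_cases htr : (BB n).trans q (w m) p
        · rw [dup_cons_pos _ _ _ _ _ _ _ htr] at hda
          have hp : stp n p (m+1) := by
            rcases q with ⟨m0, h0⟩ | u
            · have hm0 : m0 = m := hq
              rcases p with ⟨m1, h1⟩ | u'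
              · exact by have := htr.1; simp [stp]; omega
              · have := htr.1
                simp [stp]
                omega
            · rcases p with ⟨m1, h1⟩ | u'
              · exact absurd htr (by simp [BB, Btrans])
              · have : n + 1 ≤ m := hq
                simp [stp]
                omega
          obtain ⟨m', q', h1, h2, h3, h4, h5⟩ := ih T (m+1) p c' hlt hp hda
          refine ⟨m', q', by omega, h2, h3, ?_, h5⟩
          rw [List.filter_cons_of_pos (by simp)]
          simp at h4 ⊢
          omega
        · rw [dup_cons_neg _ _ _ _ _ _ _ htr] at hda
          exact absurd hda (by simp)
    · rw [dup_other _ _ _ hb] at hda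
      exact absurd hda (by simp)

/-- Invariant of every play against our automata: the consumed count equals the
"height" of Duplicator's state and the `j`-buffer holds the unconsumed prefix. -/
lemma ginv (n : ℕ) (j : Bool) (sp : ℕ → Bool × Unit) (dm : ℕ → List (Bool × Q)) :
    ∀ (t : ℕ) (c : Cfg AA (BB n)), playCfg AA (BB n) (sig j) sp dm t = some c →
      consumed dm j t ≤ t ∧ ∃ q, stp n q (consumed dm j t)
        ∧ c = mk n j (((List.range t).map (fun r => (sp r).1)).drop (consumed dm j t)) q := by
  intro t
  induction t with
  | zero =>
    intro c hc
    rw [play_zero] at hc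
    obtain rfl : mk n j [] (.inl (0, true)) = c := by injection hc
    rw [consumed_zero]
    exact ⟨le_rfl, .inl (0, true), rfl, by simp⟩
  | succ t ih =>
    intro c' hc'
    cases hpt : playCfg AA (BB n) (sig j) sp dm t with
    | none => rw [play_none _ _ _ _ _ hpt] at hc'; exact absurd hc' (by simp)
    | some c =>
      obtain ⟨hle, q, hq, rfl⟩ := ih c hpt
      rw [play_succ _ _ _ _ _ _ hpt, mid] at hc'
      have hbuf : (((List.range t).map (fun r => (sp r).1)).drop (consumed dm j t))
          ++ [(sp t).1]
          = ((List.range (t+1)).map (fun r => (sp r).1)).drop (consumed dm j t) := by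
        rw [List.range_succ, List.map_append,
          List.drop_append_of_le_length (by simpa using hle)]
        simp
      rw [hbuf] at hc'
      obtain ⟨m', q', h1, h2, h3, h4, h5⟩ :=
        dup_gen n j _ (dm t) (t+1) (consumed dm j t) q c' (by omega) hq hc'
      rw [consumed_succ]
      exact ⟨by omega, q', by rwa [← h4], by rwa [← h4]⟩

/-- After the guess `g` is committed and given that the `(n+1)`-st letter is `!g`,
Duplicator can never reach the final state. -/
lemma dup_neg (n : ℕ) (j : Bool) (w : ℕ → Bool) (g : Bool) (hw : w n = !g) :
    ∀ (L : List (Bool × Q)) (T m : ℕ) (c' : Cfg AA (BB n)),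
      1 ≤ m → m ≤ n → m ≤ T →
      dupApply AA (BB n) (mk n j (((List.range T).map w).drop m) (.inl (m, g))) L = some c' →
      ∃ m', m ≤ m' ∧ m' ≤ n ∧ m' ≤ T
        ∧ c' = mk n j (((List.range T).map w).drop m') (.inl (m', g)) := by
  intro L
  induction L with
  | nil =>
    intro T m c' h1 h2 h3 hda
    rw [dup_nil] at hda
    exact ⟨m, le_rfl, h2, h3, (Option.some_injective _ hda).symm⟩
  | cons bp L ih =>
    intro T m c' h1 h2 h3 hda
    obtain ⟨b, p⟩ := bp
    by_cases hb : b = j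
    · subst hb
      rcases eq_or_lt_of_le h3 with rfl | hlt
      · rw [List.drop_eq_nil_of_le (by simp), dup_nilbuf] at hda
        exact absurd hda (by simp)
      · have hdrop : (((List.range T).map w).drop m)
            = w m :: (((List.range T).map w).drop (m+1)) := by
          rw [List.drop_eq_getElem_cons (by simpa using hlt)]
          simp
        rw [hdrop] at hda
        by_cases htr : (BB n).trans (.inl (m, g)) (w m) p
        · rw [dup_cons_pos _ _ _ _ _ _ _ htr] at hda
          rcases p with ⟨m1, h1'⟩ | u'
          · obtain ⟨e1, e2, e3⟩ := htr
            simp at e1 e2 e3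
            obtain rfl : h1' = g := by
              rcases e3 with e3 | e3
              · omega
              · exact e3
            obtain rfl : m1 = m + 1 := e1
            obtain ⟨m', hm1, hm2, hm3, hm4⟩ := ih T (m+1) c' (by omega) (by omega) hlt hda
            exact ⟨m', by omega, hm2, hm3, hm4⟩
          · obtain ⟨e1, e2⟩ := htr
            simp at e1
            subst e1
            rw [hw] at e2
            exact absurd e2 (by cases g <;> simp)
        · rw [dup_cons_neg _ _ _ _ _ _ _ htr] at hda
          exact absurd hda (by simp)
    · rw [dup_other _ _ _ hb] at hda
      exact absurd hda (by simp)

/-- The moves of a deterministic strategy against spoiler behaviour `sp`. -/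
noncomputable def mkDm (n : ℕ)
    (f : List ((Bool × Unit) × List (Bool × Q)) → (Bool × Unit) → List (Bool × Q))
    (sp : ℕ → Bool × Unit) : ℕ → List (Bool × Q)
  | t => f (List.ofFn fun i : Fin t => (sp i, mkDm n f sp i)) (sp t)
decreasing_by exact i.2

lemma mkDm_consistent (n : ℕ) (f) (sp : ℕ → Bool × Unit) :
    Consistent AA (BB n) f sp (mkDm n f sp) := by
  intro t
  rw [mkDm]

lemma mkDm_agree (n : ℕ) (f) (sp1 sp2 : ℕ → Bool × Unit) :
    ∀ t, (∀ i, i ≤ t → sp1 i = sp2 i) → mkDm n f sp1 t = mkDm n f sp2 t := by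
  intro t
  induction t using Nat.strong_induction_on with
  | _ t ih =>
    intro hsp
    rw [mkDm, mkDm, hsp t le_rfl]
    have he : (fun i : Fin t => (sp1 i, mkDm n f sp1 i))
        = (fun i : Fin t => (sp2 i, mkDm n f sp2 i)) := by
      funext i
      have hi := i.2
      rw [hsp i (by omega), ih i hi (fun i' hi' => hsp i' (by omega))]
    rw [he]

lemma play_agree {S : Type} (A B : BA S) (σ : S → Bool) (sp1 sp2 dm1 dm2) :
    ∀ t, (∀ i, i < t → sp1 i = sp2 i ∧ dm1 i = dm2 i) →
      playCfg A B σ sp1 dm1 t = playCfg A B σ sp2 dm2 t := by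
  intro t
  induction t with
  | zero => intro _; rfl
  | succ t ih =>
    intro hag
    have h1 := (hag t (by omega)).1
    have h2 := (hag t (by omega)).2
    simp only [playCfg, ih (fun i hi => hag i (by omega)), h1, h2]

lemma neg (n : ℕ) (hn : 1 ≤ n) (j : Bool) (c1 c2 : ℕ∞)
    (hc : (if j then c1 else c2) < (n : ℕ∞)) :
    ¬ Sim2 AA (BB n) (sig j) c1 c2 := by
  rintro ⟨dstrat, hwin⟩
  have hlegal : ∀ (sp : ℕ → Bool × Unit) dm, SpLegal AA (BB n) (sig j) sp dm :=
    fun sp dm t c _ => trivial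
  -- the trial play: Spoiler plays `true` forever
  set spA : ℕ → Bool × Unit := fun _ => (true, ()) with hspA
  set dmA := mkDm n dstrat spA with hdmA
  obtain ⟨hsomeA, hwinA⟩ := hwin spA dmA (mkDm_consistent n dstrat spA) (hlegal _ _)
  obtain ⟨cA, hcA⟩ := Option.isSome_iff_exists.1 (hsomeA n)
  obtain ⟨hleA, qA, hqA, hshapeA⟩ := ginv n j spA dmA n cA hcA
  rcases qA with ⟨m0, g⟩ | u
  swap
  · have h2 : n + 1 ≤ consumed dmA j n := hqA
    omega
  have hm0 : m0 = consumed dmA j n := hqA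
  rcases Nat.eq_zero_or_pos m0 with hm00 | hm01
  · -- Duplicator never consumed: buffer `j` holds `n` letters, capacity exceeded
    have hcap := hwinA.1 n cA hcA
    have hbuf : (if j then cA.b1 else cA.b2)
        = ((List.range n).map (fun r => (spA r).1)).drop (consumed dmA j n) := by
      rw [hshapeA]; exact mk_bufj _ _ _ _
    have hlen : (if j then cA.b1 else cA.b2).length = n := by
      rw [hbuf, ← hm0, hm00]
      simp
    have hle : ((n : ℕ) : ℕ∞) ≤ (if j then c1 else c2) := by
      rw [← hlen]
      cases j
      · simpa using hcap.2
      · simpa using hcap.1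
    exact absurd hle (not_le.2 hc)
  · -- the real play: Spoiler plays `!g` as the `(n+1)`-st letter
    set spB : ℕ → Bool × Unit := fun t => (if t = n then !g else true, ()) with hspB
    set dmB := mkDm n dstrat spB with hdmB
    have hag : ∀ i, i < n → spA i = spB i ∧ dmA i = dmB i := by
      intro i hi
      constructor
      · simp [hspA, hspB, Nat.ne_of_lt hi]
      · exact mkDm_agree n dstrat spA spB i
          (fun i' hi' => by simp [hspA, hspB, show i' ≠ n by omega])
    have hplayEq : ∀ t, t ≤ n →
        playCfg AA (BB n) (sig j) spA dmA t = playCfg AA (BB n) (sig j) spB dmB t := by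
      intro t ht
      exact play_agree _ _ _ _ _ _ _ t (fun i hi => hag i (by omega))
    have hconsEq : consumed dmA j n = consumed dmB j n := by
      unfold consumed
      exact Finset.sum_congr rfl fun i hi => by
        rw [(hag i (Finset.mem_range.1 hi)).2]
    obtain ⟨hsomeB, hwinB⟩ := hwin spB dmB (mkDm_consistent n dstrat spB) (hlegal _ _)
    have ninv : ∀ t, n ≤ t → ∀ c, playCfg AA (BB n) (sig j) spB dmB t = some c →
        ∃ m', 1 ≤ m' ∧ m' ≤ n ∧ c.qb = Sum.inl (m', g) := by
      intro t ht
      induction t, ht using Nat.le_induction with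
      | base =>
        intro c hcB
        rw [← hplayEq n le_rfl, hcA] at hcB
        obtain rfl : cA = c := by injection hcB
        refine ⟨m0, hm01, by omega, ?_⟩
        rw [hshapeA]
        rw [mk_qb, hm0]
      | succ t ht ih =>
        intro c' hc'
        obtain ⟨c, hpt⟩ := Option.isSome_iff_exists.1 (hsomeB t)
        obtain ⟨hle, q, hq, hshape⟩ := ginv n j spB dmB t c hpt
        obtain ⟨m', h1', h2', hqb⟩ := ih c hpt
        have hqq : q = Sum.inl (m', g) := by
          rw [← mk_qb n j _ q, ← hshape]; exact hqb
        subst hqq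
        have hm' : m' = consumed dmB j t := hq
        rw [play_succ _ _ _ _ _ _ hpt, hshape, mid] at hc'
        have hbuf : (((List.range t).map (fun r => (spB r).1)).drop (consumed dmB j t))
              ++ [(spB t).1]
            = ((List.range (t+1)).map (fun r => (spB r).1)).drop (consumed dmB j t) := by
          rw [List.range_succ, List.map_append,
            List.drop_append_of_le_length (by simpa using hle)]
          simp
        rw [hbuf, ← hm'] at hc'
        obtain ⟨m'', hA, hB, hC, hD⟩ :=
          dup_neg n j (fun r => (spB r).1) g (by simp [hspB]) (dmB t) (t+1) m' c'
            h1' h2' (by omega) hc'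
        exact ⟨m'', by omega, hB, by rw [hD, mk_qb]⟩
    have hconsle : ∀ m, consumed dmB j m ≤ n := by
      intro m
      rcases le_or_gt m n with hm | hm
      · calc consumed dmB j m ≤ consumed dmB j n := consumed_mono _ _ hm
          _ = consumed dmA j n := hconsEq.symm
          _ ≤ n := by omega
      · obtain ⟨c, hpt⟩ := Option.isSome_iff_exists.1 (hsomeB m)
        obtain ⟨hle, q, hq, hshape⟩ := ginv n j spB dmB m c hpt
        obtain ⟨m', h1', h2', hqb⟩ := ninv m (by omega) c hpt
        have hqq : q = Sum.inl (m', g) := by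
          rw [← mk_qb n j _ q, ← hshape]; exact hqb
        subst hqq
        have : m' = consumed dmB j m := hq
        omega
    rcases hwinB.2 with ⟨N, hN⟩ | ⟨hdrain, _⟩
    · exact hN N le_rfl trivial
    · obtain ⟨m, hm⟩ := hdrain (n+1) j
      rw [pushed_const] at hm
      have := hconsle m
      omega

end TB
/-- For capacities with `(ℓ1, ℓ2) ≰ (k1, k2)` pointwise, there are
Büchi automata `A`, `B` over some alphabet with a distribution function `σ` such that
`A ⊑(ℓ1,ℓ2) B` but not `A ⊑(k1,k2) B`. -/
theorem twoBuffer_strict (k1 k2 l1 l2 : ℕ∞) (h : ¬ (l1 ≤ k1 ∧ l2 ≤ k2)) :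
    ∃ (S : Type) (A B : BA S) (σ : S → Bool),
      Sim2 A B σ l1 l2 ∧ ¬ Sim2 A B σ k1 k2 := by
  rcases not_and_or.1 h with h1 | h2
  · have hlt : k1 < l1 := not_le.1 h1
    have hk : k1 ≠ ⊤ := hlt.ne_top
    set n := k1.toNat + 1 with hn
    have hcast : ((n : ℕ) : ℕ∞) = k1 + 1 := by
      rw [hn]
      push_cast
      rw [ENat.coe_toNat hk]
    refine ⟨Bool, TB.AA, TB.BB n, TB.sig true, ?_, ?_⟩
    · apply TB.pos n (by omega) true l1 l2
      rw [if_pos rfl, hcast]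
      exact (ENat.add_one_le_iff hk).2 hlt
    · apply TB.neg n (by omega) true k1 k2
      rw [if_pos rfl, hcast]
      exact (ENat.lt_add_one_iff hk).2 le_rfl
  · have hlt : k2 < l2 := not_le.1 h2
    have hk : k2 ≠ ⊤ := hlt.ne_top
    set n := k2.toNat + 1 with hn
    have hcast : ((n : ℕ) : ℕ∞) = k2 + 1 := by
      rw [hn]
      push_cast
      rw [ENat.coe_toNat hk]
    refine ⟨Bool, TB.AA, TB.BB n, TB.sig false, ?_, ?_⟩
    · apply TB.pos n (by omega) false l1 l2
      rw [if_neg (by simp), hcast]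
      exact (ENat.add_one_le_iff hk).2 hlt
    · apply TB.neg n (by omega) false k1 k2
      rw [if_neg (by simp), hcast]
      exact (ENat.lt_add_one_iff hk).2 le_rfl
end

section
/- Let 𝒜, ℬ be Büchi automata over alphabet Σ with distribution function σ: Σ → {1,2}, and let k1, k2 ∈ ℕ ∪ {ω}. If 𝒜 ⊑(k1,k2) ℬ, then for every infinite word w ∈ L(𝒜) there exists v ∈ L(ℬ) such that the projections of w and v onto Σ1 agree and the projections onto Σ2 agree, where Σi = σ⁻¹(i). -/
open scoped Classical

/-- The concatenation of the infinite sequence of finite words `g 0, g 1, g 2, …`,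
as a finite or infinite word represented by a function `ℕ → Option α`
(`iConcat g k = some a` iff the concatenation has an `k`-th letter and it is `a`). -/
noncomputable def iConcat {α : Type} (g : ℕ → List α) : ℕ → Option α := fun k =>
  if h : ∃ m, k < ((List.range m).map g).flatten.length
  then ((List.range h.choose).map g).flatten[k]?
  else none

/-- The projection of an infinite word `w` onto the letters of buffer index `j`
(i.e. onto the sub-alphabet `σ⁻¹(j)`), as a finite or infinite word. -/
noncomputable def projW {S : Type} (σ : S → Bool) (j : Bool) (w : ℕ → S) : ℕ → Option S :=
  iConcat fun n => if σ (w n) = j then [w n] else []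

section Aux
variable {α : Type}

/-- Concatenation of the first `n` blocks. -/
def flat (g : ℕ → List α) (n : ℕ) : List α := ((List.range n).map g).flatten

lemma flat_succ (g : ℕ → List α) (n : ℕ) : flat g (n+1) = flat g n ++ g n := by
  simp [flat, List.range_succ]

lemma flat_add (g : ℕ → List α) (a b : ℕ) :
    flat g (a + b) = flat g a ++ (((List.range b).map fun t => g (a + t)).flatten) := by
  induction b with
  | zero => simp [flat]
  | succ b ih =>
      rw [← Nat.add_assoc, flat_succ, ih, List.range_succ]
      simp

lemma flat_prefix (g : ℕ → List α) {m n : ℕ} (h : m ≤ n) : flat g m <+: flat g n := by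
  obtain ⟨b, rfl⟩ := Nat.exists_eq_add_of_le h
  rw [flat_add]; exact List.prefix_append _ _

lemma flat_len_mono (g : ℕ → List α) {m n : ℕ} (h : m ≤ n) :
    (flat g m).length ≤ (flat g n).length :=
  (flat_prefix g h).length_le

lemma flat_getElem?_stable (g : ℕ → List α) {m n k : ℕ} (h : k < (flat g m).length)
    (hmn : m ≤ n) : (flat g n)[k]? = (flat g m)[k]? := by
  obtain ⟨t, ht⟩ := flat_prefix g hmn
  rw [← ht, List.getElem?_append, if_pos h]

lemma flat_getElem?_eq (g : ℕ → List α) {m n k : ℕ} (hm : k < (flat g m).length)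
    (hn : k < (flat g n).length) : (flat g m)[k]? = (flat g n)[k]? := by
  rcases le_total m n with h | h
  · exact (flat_getElem?_stable g hm h).symm
  · exact flat_getElem?_stable g hn h

lemma flat_getD_ix (g : ℕ → List α) {n t : ℕ} (h : t < (g n).length) (d : α) :
    (flat g (n+1)).getD ((flat g n).length + t) d = (g n).getD t d := by
  rw [flat_succ, List.getD_eq_getElem?_getD, List.getD_eq_getElem?_getD,
    List.getElem?_append]
  rw [if_neg (by omega)]
  congr 2
  omega

lemma iConcat_eq {g : ℕ → List α} {k m : ℕ} (h : k < (flat g m).length) :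
    iConcat g k = (flat g m)[k]? := by
  have hex : ∃ m, k < ((List.range m).map g).flatten.length := ⟨m, h⟩
  have h2 : k < (flat g hex.choose).length := hex.choose_spec
  rw [iConcat, dif_pos hex]
  exact flat_getElem?_eq g h2 h

lemma iConcat_eq_none {g : ℕ → List α} {k : ℕ} (h : ∀ m, (flat g m).length ≤ k) :
    iConcat g k = none := by
  rw [iConcat, dif_neg]
  push_neg
  exact h

/-- The element at global position `k` of the infinite concatenation. -/
noncomputable def globAt (g : ℕ → List α) (d : α) (k : ℕ) : α :=
  if h : ∃ n, k < (flat g n).length then (flat g h.choose).getD k d else d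

lemma globAt_eq {g : ℕ → List α} {d : α} {k n : ℕ} (h : k < (flat g n).length) :
    globAt g d k = (flat g n).getD k d := by
  have hex : ∃ n, k < (flat g n).length := ⟨n, h⟩
  have h2 : k < (flat g hex.choose).length := hex.choose_spec
  rw [globAt, dif_pos hex, List.getD_eq_getElem?_getD, List.getD_eq_getElem?_getD,
    flat_getElem?_eq g h2 h]

lemma getLastD_eq_getD {l : List α} (hl : l ≠ []) (d d' : α) :
    l.getLastD d = l.getD (l.length - 1) d' := by
  induction l generalizing d d' with
  | nil => exact absurd rfl hl
  | cons a l ih =>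
      cases l with
      | nil => rfl
      | cons b l => simpa using ih (by simp) d d'

end Aux
section DupSpec
variable {S : Type} {A B : BA S}

/-- Buffer `j` of a configuration. -/
def buf (j : Bool) (c : Cfg A B) : List S := if j then c.b1 else c.b2

/-- The (tagged) letters consumed during a sequence of Duplicator steps. -/
noncomputable def dupTrace : Cfg A B → List (Bool × B.Q) → List (Bool × S)
  | _, [] => []
  | c, (j, p') :: ms =>
    if j then
      match c.b1 with
      | [] => []
      | b :: β => (true, b) :: dupTrace ⟨c.qa, β, c.b2, p'⟩ ms
    else
      match c.b2 with
      | [] => []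
      | b :: β => (false, b) :: dupTrace ⟨c.qa, c.b1, β, p'⟩ ms

lemma dupApply_spec (A B : BA S) :
    ∀ (ms : List (Bool × B.Q)) (c c' : Cfg A B), dupApply A B c ms = some c' →
    c'.qa = c.qa ∧
    (dupTrace c ms).length = ms.length ∧
    (∀ j : Bool,
      (ms.filter fun x => x.1 = j).length ≤ (buf j c).length ∧
      buf j c' = (buf j c).drop ((ms.filter fun x => x.1 = j).length) ∧
      ((dupTrace c ms).filter fun e => e.1 = j).map Prod.snd
        = (buf j c).take ((ms.filter fun x => x.1 = j).length)) ∧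
    c'.qb = (ms.map Prod.snd).getLastD c.qb ∧
    (∀ t, t < ms.length → ∀ (dS : Bool × S) (dQ : Bool × B.Q),
      B.trans (if t = 0 then c.qb else (ms.getD (t-1) dQ).2)
              ((dupTrace c ms).getD t dS).2
              ((ms.getD t dQ).2)) := by
  intro ms
  induction ms with
  | nil =>
      intro c c' h
      rw [dupApply] at h
      cases h
      refine ⟨rfl, rfl, ?_, rfl, by simp⟩
      intro j; simp [dupTrace]
  | cons m ms ih =>
      obtain ⟨j, p'⟩ := m
      intro c c' h
      obtain ⟨qa, b1, b2, qb⟩ := c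
      cases j with
      | true =>
          cases b1 with
          | nil => rw [dupApply] at h; simp at h
          | cons b β =>
              rw [dupApply] at h
              simp only [if_true] at h
              by_cases htr : B.trans qb b p'
              · rw [if_pos htr] at h
                obtain ⟨hqa, hlen, hbuf, hqb, hchain⟩ := ih _ _ h
                refine ⟨hqa, ?_, ?_, ?_, ?_⟩
                · simp [dupTrace, hlen]
                · intro jj
                  obtain ⟨h1, h2, h3⟩ := hbuf jj
                  cases jj with
                  | true =>
                      simp only [buf, if_true] at h1 h2 h3 ⊢
                      refine ⟨?_, ?_, ?_⟩
                      · simp only [List.filter_cons, List.length_cons]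
                        simp only [decide_eq_true_eq] -- ?
                        simpa using Nat.succ_le_succ h1
                      · simp only [List.filter_cons]
                        simpa using h2
                      · simp only [dupTrace, List.filter_cons]
                        simpa using h3
                  | false =>
                      simp only [buf, if_false] at h1 h2 h3 ⊢
                      refine ⟨?_, ?_, ?_⟩
                      · simpa using h1
                      · simpa using h2
                      · simp only [dupTrace]
                        simpa using h3
                · simp only [List.map_cons, List.getLastD_cons]
                  simpa using hqb
                · intro t ht dS dQ
                  cases t with
                  | zero =>
                      simpa [dupTrace] using htr
                  | succ t =>
                      have := hchain t (by simpa using ht) dS dQ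
                      simp only [dupTrace]
                      cases t with
                      | zero => simpa using this
                      | succ t => simpa using this
              · rw [if_neg htr] at h; simp at h
      | false =>
          cases b2 with
          | nil => rw [dupApply] at h; simp at h
          | cons b β =>
              rw [dupApply] at h
              simp only [if_false] at h
              by_cases htr : B.trans qb b p'
              · rw [if_pos htr] at h
                obtain ⟨hqa, hlen, hbuf, hqb, hchain⟩ := ih _ _ h
                refine ⟨hqa, ?_, ?_, ?_, ?_⟩
                · simp [dupTrace, hlen]
                · intro jj
                  obtain ⟨h1, h2, h3⟩ := hbuf jj
                  cases jj with
                  | false =>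
                      simp only [buf, if_false] at h1 h2 h3 ⊢
                      refine ⟨?_, ?_, ?_⟩
                      · simp only [List.filter_cons, List.length_cons]
                        simpa using Nat.succ_le_succ h1
                      · simp only [List.filter_cons]
                        simpa using h2
                      · simp only [dupTrace, List.filter_cons]
                        simpa using h3
                  | true =>
                      simp only [buf, if_true] at h1 h2 h3 ⊢
                      refine ⟨?_, ?_, ?_⟩
                      · simpa using h1
                      · simpa using h2
                      · simp only [dupTrace]
                        simpa using h3
                · simp only [List.map_cons, List.getLastD_cons]
                  simpa using hqb
                · intro t ht dS dQ
                  cases t with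
                  | zero =>
                      simpa [dupTrace] using htr
                  | succ t =>
                      have := hchain t (by simpa using ht) dS dQ
                      simp only [dupTrace]
                      cases t with
                      | zero => simpa using this
                      | succ t => simpa using this
              · rw [if_neg htr] at h; simp at h

end DupSpec
lemma getD_map_snd {γ δ : Type*} (l : List (γ × δ)) {t : ℕ} (h : t < l.length)
    (d : δ) (d' : γ × δ) : (l.map Prod.snd).getD t d = (l.getD t d').2 := by
  rw [List.getD_eq_getElem _ _ (by simpa using h), List.getD_eq_getElem _ _ h,
    List.getElem_map]

lemma flatten_range_if {β : Type} (j : Bool) :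
    ∀ (l : List (Bool × β)) (d : Bool × β),
    ((List.range l.length).map fun t =>
        if (l.getD t d).1 = j then [(l.getD t d).2] else []).flatten
      = (l.filter fun e => e.1 = j).map Prod.snd := by
  intro l
  induction l with
  | nil => intro d; simp
  | cons e l ih =>
      intro d
      rw [List.length_cons, List.range_succ_eq_map]
      simp only [List.map_cons, List.map_map, List.flatten_cons]
      have hrw : (List.range l.length).map
          ((fun t => if ((e :: l).getD t d).1 = j then [((e :: l).getD t d).2] else [])
            ∘ Nat.succ)
          = (List.range l.length).map fun t =>
              if (l.getD t d).1 = j then [(l.getD t d).2] else [] := by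
        apply List.map_congr_left
        intro t _
        simp [Function.comp, List.getD_cons_succ]
      rw [hrw, ih d]
      by_cases hje : e.1 = j
      · simp [List.filter_cons, hje, List.getD_cons_zero]
      · simp [List.filter_cons, hje, List.getD_cons_zero]
lemma main_exists {S : Type} (A B : BA S) (σ : S → Bool) (w : ℕ → S)
    (sp : ℕ → S × A.Q) (dm : ℕ → List (Bool × B.Q))
    (hw1 : ∀ i, (sp i).1 = w i)
    (hdef : ∀ n, (playCfg A B σ sp dm n).isSome)
    (hconsume : ∀ n j, ∃ m, pushed σ sp j n ≤ consumed dm j m)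
    (haccB : ∀ n, ∃ m, n ≤ m ∧ ∃ x ∈ dm m, B.acc x.2) :
    ∃ v ∈ BA.Lang B, projW σ true w = projW σ true v ∧ projW σ false w = projW σ false v := by
  classical
  set cfg : ℕ → Cfg A B := fun n => (playCfg A B σ sp dm n).get (hdef n) with hcfg
  have hplay : ∀ n, playCfg A B σ sp dm n = some (cfg n) :=
    fun n => (Option.some_get (hdef n)).symm
  have hcfg0 : cfg 0 = ⟨A.init, [], [], B.init⟩ := by
    have := hplay 0
    rw [playCfg] at this
    exact (Option.some_inj.1 this).symm
  have hstep : ∀ n, dupApply A B (midCfg σ (cfg n) (sp n)) (dm n) = some (cfg (n+1)) := by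
    intro n
    have e := hplay (n+1)
    rw [playCfg, hplay n] at e
    have e' : (if A.trans (cfg n).qa (sp n).1 (sp n).2
        then dupApply A B (midCfg σ (cfg n) (sp n)) (dm n) else none) = some (cfg (n+1)) := e
    by_cases ht : A.trans (cfg n).qa (sp n).1 (sp n).2
    · rw [if_pos ht] at e'; exact e'
    · rw [if_neg ht] at e'; exact absurd e' (by simp)
  set tr : ℕ → List (Bool × S) := fun n => dupTrace (midCfg σ (cfg n) (sp n)) (dm n) with htr
  have spec := fun n => dupApply_spec A B (dm n) _ _ (hstep n)
  have trlen : ∀ n, (tr n).length = (dm n).length := fun n => (spec n).2.1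
  set gP : Bool → ℕ → List S := fun j i => if σ (w i) = j then [w i] else [] with hgP
  set P : Bool → ℕ → List S := fun j n => flat (gP j) n with hP
  have hPsucc : ∀ j n, P j (n+1) = P j n ++ gP j n := fun j n => flat_succ (gP j) n
  have hPlenmono : ∀ j {m n}, m ≤ n → (P j m).length ≤ (P j n).length :=
    fun j _ _ h => flat_len_mono (gP j) h
  have hPmem : ∀ j n a, a ∈ P j n → σ a = j := by
    intro j n a ha
    simp only [hP, flat, List.mem_flatten, List.mem_map] at ha
    obtain ⟨_, ⟨i, _, rfl⟩, hai⟩ := ha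
    simp only [hgP] at hai
    by_cases h : σ (w i) = j
    · rw [if_pos h] at hai
      simp only [List.mem_singleton] at hai
      rw [hai]; exact h
    · rw [if_neg h] at hai
      exact absurd hai List.not_mem_nil
  have hPlen : ∀ j n, (P j n).length = pushed σ sp j n := by
    intro j n
    induction n with
    | zero => simp [hP, flat, pushed]
    | succ n ih =>
        rw [hPsucc, List.length_append, ih]
        have h2 : pushed σ sp j (n+1) = pushed σ sp j n + (if σ (sp n).1 = j then 1 else 0) := by
          simp only [pushed, Finset.range_add_one, Finset.filter_insert]
          split
          · rw [Finset.card_insert_of_notMem (by simp)]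
          · rfl
        rw [h2]
        congr 1
        by_cases h : σ (w n) = j <;> simp [hgP, h, hw1 n]
  have hCsucc : ∀ j n, consumed dm j (n+1)
      = consumed dm j n + ((dm n).filter fun x => x.1 = j).length := by
    intro j n; rw [consumed, Finset.sum_range_succ]; rfl
  have hmidbuf : ∀ n j, buf j (midCfg σ (cfg n) (sp n)) = buf j (cfg n) ++ gP j n := by
    intro n j
    have hw := hw1 n
    cases j <;> cases hσ : σ (w n) <;>
      simp [buf, midCfg, hgP, hw, hσ]
  have Inv : ∀ n j, consumed dm j n ≤ (P j n).length
      ∧ buf j (cfg n) = (P j n).drop (consumed dm j n) := by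
    intro n
    induction n with
    | zero =>
        intro j
        constructor
        · simp [consumed]
        · cases j <;> simp [buf, hcfg0, hP, flat, consumed]
    | succ n ih =>
        intro j
        obtain ⟨h1, h2⟩ := ih j
        obtain ⟨g1, g2, g3⟩ := (spec n).2.2.1 j
        have hmid : buf j (midCfg σ (cfg n) (sp n)) = (P j (n+1)).drop (consumed dm j n) := by
          rw [hmidbuf, h2, hPsucc j n, List.drop_append_of_le_length h1]
        have hlenmono : (P j n).length ≤ (P j (n+1)).length := by
          rw [hPsucc j n, List.length_append]; omega
        have hlenmid : (buf j (midCfg σ (cfg n) (sp n))).length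
            = (P j (n+1)).length - consumed dm j n := by
          rw [hmid, List.length_drop]
        constructor
        · rw [hCsucc]
          rw [hlenmid] at g1
          omega
        · rw [hCsucc, g2, hmid, List.drop_drop]
  have hmidP : ∀ n j, buf j (midCfg σ (cfg n) (sp n))
      = (P j (n+1)).drop (consumed dm j n) := by
    intro n j
    obtain ⟨h1, h2⟩ := Inv n j
    rw [hmidbuf, h2, hPsucc j n, List.drop_append_of_le_length h1]
  have CL : ∀ j n, flat (fun i => ((tr i).filter fun e => e.1 = j).map Prod.snd) n
      = (P j n).take (consumed dm j n) := by
    intro j n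
    induction n with
    | zero => simp [flat, hP, consumed]
    | succ n ih =>
        rw [flat_succ, ih, hCsucc]
        have g3 := ((spec n).2.2.1 j).2.2
        rw [g3, hmidP n j]
        have h1 := (Inv n j).1
        have htk : (P j n).take (consumed dm j n) = (P j (n+1)).take (consumed dm j n) := by
          rw [hPsucc j n, List.take_append_of_le_length h1]
        rw [htk]
        exact List.take_add.symm
  have hmidmem : ∀ n j a, a ∈ buf j (midCfg σ (cfg n) (sp n)) → σ a = j := by
    intro n j a ha
    rw [hmidP n j] at ha
    exact hPmem j (n+1) a (List.mem_of_mem_drop ha)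
  have htag : ∀ n e, e ∈ tr n → σ e.2 = e.1 := by
    intro n e he
    have h1 : e ∈ (tr n).filter fun x => x.1 = e.1 :=
      List.mem_filter.2 ⟨he, by simp⟩
    have h2 : e.2 ∈ ((tr n).filter fun x => x.1 = e.1).map Prod.snd :=
      List.mem_map_of_mem h1
    rw [((spec n).2.2.1 e.1).2.2] at h2
    exact hmidmem n e.1 e.2 (List.mem_of_mem_take h2)
  have lenTM : ∀ n, (flat tr n).length = (flat dm n).length := by
    intro n
    induction n with
    | zero => rfl
    | succ n ih =>
        rw [flat_succ, flat_succ, List.length_append, List.length_append, ih, trlen]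
  have hub : ∀ K, ∃ n, K ≤ (flat dm n).length := by
    intro K
    induction K with
    | zero => exact ⟨0, Nat.zero_le _⟩
    | succ K ih =>
        obtain ⟨n, hn⟩ := ih
        obtain ⟨m, hm, x, hx, _⟩ := haccB n
        refine ⟨m+1, ?_⟩
        have h1 : (flat dm n).length ≤ (flat dm m).length := flat_len_mono dm hm
        have h2 : (flat dm (m+1)).length = (flat dm m).length + (dm m).length := by
          rw [flat_succ, List.length_append]
        have h3 : 1 ≤ (dm m).length := List.length_pos_iff.2 (List.ne_nil_of_mem hx)
        omega
  have hrd : ∀ k, ∃ n, (flat dm n).length ≤ k ∧ k < (flat dm (n+1)).length := by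
    intro k
    obtain ⟨n0, hn0⟩ := hub (k+1)
    have hex : ∃ n, k < (flat dm n).length := ⟨n0, hn0⟩
    have hlt : k < (flat dm (Nat.find hex)).length := Nat.find_spec hex
    have hne : Nat.find hex ≠ 0 := by
      intro h0
      rw [h0] at hlt
      simp [flat] at hlt
    obtain ⟨n, hn⟩ := Nat.exists_eq_succ_of_ne_zero hne
    rw [hn] at hlt
    refine ⟨n, ?_, hlt⟩
    by_contra hlt2
    exact Nat.find_min hex (m := n) (by omega) (by omega)
  set dS : Bool × S := (true, w 0) with hdS
  set dQ : Bool × B.Q := (true, B.init) with hdQ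
  set vt : ℕ → Bool × S := globAt tr dS with hvt
  set v : ℕ → S := fun k => (vt k).2 with hv
  set Mv : ℕ → Bool × B.Q := globAt dm dQ with hMv
  set π : ℕ → B.Q := fun k => Nat.rec B.init (fun k _ => (Mv k).2) k with hπ
  have hπs : ∀ k, π (k+1) = (Mv k).2 := fun k => rfl
  have hMvix : ∀ n t, t < (dm n).length → Mv ((flat dm n).length + t) = (dm n).getD t dQ := by
    intro n t ht
    have hlt : (flat dm n).length + t < (flat dm (n+1)).length := by
      rw [flat_succ, List.length_append]; omega
    rw [hMv, globAt_eq hlt, flat_getD_ix dm ht]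
  have hvtix : ∀ n t, t < (dm n).length → vt ((flat dm n).length + t) = (tr n).getD t dS := by
    intro n t ht
    have ht' : t < (tr n).length := by rw [trlen]; exact ht
    have hlt : (flat tr n).length + t < (flat tr (n+1)).length := by
      rw [flat_succ, List.length_append]; omega
    have hl2 : (flat dm n).length = (flat tr n).length := (lenTM n).symm
    rw [hvt, hl2, globAt_eq hlt, flat_getD_ix tr ht']
  have hQ : ∀ n, (cfg n).qb = π ((flat dm n).length) := by
    intro n
    induction n with
    | zero => rw [hcfg0]; rfl
    | succ n ih =>
        have hqb := (spec n).2.2.2.1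
        have hmq : (midCfg σ (cfg n) (sp n)).qb = (cfg n).qb := rfl
        rcases eq_or_ne (dm n) [] with hnil | hnn
        · rw [hqb, hnil]
          simp only [List.map_nil, List.getLastD_nil]
          rw [hmq, ih]
          congr 2
          rw [flat_succ, hnil, List.append_nil]
        · have hL : 1 ≤ (dm n).length := List.length_pos_iff.2 hnn
          have e1 : ((dm n).map Prod.snd).getLastD (midCfg σ (cfg n) (sp n)).qb
              = ((dm n).getD ((dm n).length - 1) dQ).2 := by
            rw [getLastD_eq_getD (by simpa using hnn) _ dQ.2]
            rw [List.length_map]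
            exact getD_map_snd (dm n) (by omega) dQ.2 dQ
          have e2 : π ((flat dm (n+1)).length) = ((dm n).getD ((dm n).length - 1) dQ).2 := by
            have hlen : (flat dm (n+1)).length = (flat dm n).length + (dm n).length := by
              rw [flat_succ, List.length_append]
            have hix : (flat dm (n+1)).length
                = ((flat dm n).length + ((dm n).length - 1)) + 1 := by omega
            rw [hix, hπs, hMvix n ((dm n).length - 1) (by omega)]
          rw [hqb, e1, e2]
  have hvtrans : ∀ k, B.trans (π k) (v k) (π (k+1)) := by
    intro k
    obtain ⟨n, h1, h2⟩ := hrd k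
    have hlen : (flat dm (n+1)).length = (flat dm n).length + (dm n).length := by
      rw [flat_succ, List.length_append]
    obtain ⟨t, rfl⟩ : ∃ t, k = (flat dm n).length + t :=
      ⟨k - (flat dm n).length, by omega⟩
    have htl : t < (dm n).length := by omega
    have hchain := (spec n).2.2.2.2 t htl dS dQ
    have hvk : v ((flat dm n).length + t) = ((tr n).getD t dS).2 := by
      show (vt _).2 = _
      rw [hvtix n t htl]
    have hπk1 : π ((flat dm n).length + t + 1) = ((dm n).getD t dQ).2 := by
      rw [hπs, hMvix n t htl]
    rw [hvk, hπk1]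
    rcases Nat.eq_zero_or_pos t with rfl | htpos
    · rw [if_pos rfl] at hchain
      have hπk : π ((flat dm n).length + 0) = (cfg n).qb := by
        rw [Nat.add_zero, ← hQ]
      rw [hπk]
      exact hchain
    · rw [if_neg (by omega)] at hchain
      have hπk : π ((flat dm n).length + t) = ((dm n).getD (t - 1) dQ).2 := by
        have hk1 : (flat dm n).length + t = ((flat dm n).length + (t - 1)) + 1 := by omega
        rw [hk1, hπs, hMvix n _ (by omega)]
      rw [hπk]
      exact hchain
  have hvmem : v ∈ BA.Lang B := by
    refine ⟨π, rfl, hvtrans, ?_⟩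
    intro K
    obtain ⟨n, hn⟩ := hub K
    obtain ⟨m, hm, x, hx, hax⟩ := haccB n
    obtain ⟨t, htl, hxe⟩ := List.mem_iff_getElem.1 hx
    refine ⟨(flat dm m).length + t + 1, ?_, ?_⟩
    · have := flat_len_mono dm hm; omega
    · rw [hπs, hMvix m t htl, List.getD_eq_getElem _ _ htl, hxe]
      exact hax
  have hσv : ∀ k, σ (v k) = (vt k).1 := by
    intro k
    obtain ⟨n', h1, h2⟩ := hrd k
    have hlen : (flat dm (n'+1)).length = (flat dm n').length + (dm n').length := by
      rw [flat_succ, List.length_append]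
    obtain ⟨t, rfl⟩ : ∃ t, k = (flat dm n').length + t :=
      ⟨k - (flat dm n').length, by omega⟩
    have htl : t < (dm n').length := by omega
    have hvtk : vt ((flat dm n').length + t) = (tr n').getD t dS := hvtix n' t htl
    have ht' : t < (tr n').length := by rw [trlen]; exact htl
    have hmem : vt ((flat dm n').length + t) ∈ tr n' := by
      rw [hvtk, List.getD_eq_getElem _ _ ht']
      exact List.getElem_mem _
    exact htag n' _ hmem
  have hPv : ∀ j n, flat (fun k => if σ (v k) = j then [v k] else []) ((flat dm n).length)
      = (P j n).take (consumed dm j n) := by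
    intro j n
    induction n with
    | zero => simp [flat, hP, consumed]
    | succ n ih =>
        have hlen : (flat dm (n+1)).length = (flat dm n).length + (dm n).length := by
          rw [flat_succ, List.length_append]
        rw [hlen, flat_add, ih]
        have key : ((List.range (dm n).length).map fun t =>
            if σ (v ((flat dm n).length + t)) = j then [v ((flat dm n).length + t)] else []).flatten
            = ((tr n).filter fun e => e.1 = j).map Prod.snd := by
          have hrw : (List.range (dm n).length).map (fun t =>
              if σ (v ((flat dm n).length + t)) = j then [v ((flat dm n).length + t)] else [])
              = (List.range (dm n).length).map fun t =>
                if ((tr n).getD t dS).1 = j then [((tr n).getD t dS).2] else [] := by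
            apply List.map_congr_left
            intro t htm
            have htl : t < (dm n).length := List.mem_range.1 htm
            have hklt : (flat dm n).length + t < (flat dm (n+1)).length := by omega
            have hσ : σ (v ((flat dm n).length + t)) = (vt ((flat dm n).length + t)).1 :=
              hσv _
            have hvv : v ((flat dm n).length + t) = ((tr n).getD t dS).2 := by
              rw [hv]
              show (vt _).2 = _
              rw [hvtix n t htl]
            rw [hσ, hvtix n t htl, hvv]
          rw [hrw, ← trlen n]
          exact flatten_range_if j (tr n) dS
        rw [key]
        have g3 := ((spec n).2.2.1 j).2.2
        rw [g3, hmidP n j]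
        have h1 := (Inv n j).1
        have htk : (P j n).take (consumed dm j n) = (P j (n+1)).take (consumed dm j n) := by
          rw [hPsucc j n, List.take_append_of_le_length h1]
        rw [hCsucc, htk]
        exact List.take_add.symm
  have hproj : ∀ j, projW σ j w = projW σ j v := by
    intro j
    funext k
    rw [projW, projW]
    by_cases hc : ∃ n, k < (P j n).length
    · obtain ⟨n, hn⟩ := hc
      obtain ⟨m, hm⟩ := hconsume n j
      have hpm : pushed σ sp j n = (P j n).length := (hPlen j n).symm
      have hcm : consumed dm j m ≤ (P j m).length := (Inv m j).1
      have hkC : k < consumed dm j m := by omega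
      have hkm : k < (P j m).length := by omega
      have hL : k < (flat (fun k => if σ (v k) = j then [v k] else [])
          ((flat dm m).length)).length := by
        rw [hPv j m, List.length_take]; omega
      have e1 : iConcat (fun i => if σ (w i) = j then [w i] else []) k
          = (flat (fun i => if σ (w i) = j then [w i] else []) n)[k]? := iConcat_eq hn
      rw [e1, iConcat_eq hL, hPv j m, List.getElem?_take, if_pos hkC]
      exact flat_getElem?_eq _ hn hkm
    · push_neg at hc
      have e1 : iConcat (fun i => if σ (w i) = j then [w i] else []) k = none :=
        iConcat_eq_none (fun m => hc m)
      rw [e1, iConcat_eq_none ?_]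
      intro K
      obtain ⟨n, hn⟩ := hub K
      calc (flat (fun k => if σ (v k) = j then [v k] else []) K).length
          ≤ (flat (fun k => if σ (v k) = j then [v k] else []) ((flat dm n).length)).length :=
            flat_len_mono _ hn
        _ = ((P j n).take (consumed dm j n)).length := by rw [hPv]
        _ ≤ (P j n).length := by rw [List.length_take]; omega
        _ ≤ k := hc n
  exact ⟨v, hvmem, hproj true, hproj false⟩
/-- If `A ⊑(k1,k2) B` then for every `w ∈ L(A)` there is a
`v ∈ L(B)` whose projections onto both sub-alphabets `Σ1 = σ⁻¹(true)` and
`Σ2 = σ⁻¹(false)` agree with those of `w`. -/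
theorem sim2_implies_projection_inclusion {S : Type} (A B : BA S) (σ : S → Bool)
    (k1 k2 : ℕ∞) (h : Sim2 A B σ k1 k2) :
    ∀ w ∈ BA.Lang A, ∃ v ∈ BA.Lang B,
      projW σ true w = projW σ true v ∧ projW σ false w = projW σ false v := by
  classical
  obtain ⟨dstrat, hws⟩ := h
  intro w hw
  obtain ⟨ρ, hρ0, hρt, hρa⟩ := hw
  set sp : ℕ → S × A.Q := fun n => (w n, ρ (n+1)) with hsp
  set H : ℕ → List ((S × A.Q) × List (Bool × B.Q)) :=
    fun n => Nat.rec [] (fun n h => h ++ [(sp n, dstrat h (sp n))]) n with hH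
  set dm : ℕ → List (Bool × B.Q) := fun n => dstrat (H n) (sp n) with hdm
  have hHs : ∀ n, H (n+1) = H n ++ [(sp n, dm n)] := fun n => rfl
  have hHof : ∀ n, H n = List.ofFn fun i : Fin n => (sp i, dm i) := by
    intro n
    induction n with
    | zero => rfl
    | succ n ih =>
        rw [hHs, ih, List.ofFn_succ']
        simp [List.concat_eq_append]
  have hconsist : Consistent A B dstrat sp dm := by
    intro n
    rw [← hHof]
  have hqa : ∀ n c, playCfg A B σ sp dm n = some c → c.qa = ρ n := by
    intro n
    induction n with
    | zero =>
        intro c hc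
        rw [playCfg] at hc
        cases hc
        exact hρ0.symm
    | succ n ih =>
        intro c hc
        rw [playCfg] at hc
        cases e : playCfg A B σ sp dm n with
        | none => rw [e] at hc; exact absurd hc (by simp)
        | some c0 =>
            rw [e] at hc
            have hc' : (if A.trans c0.qa (sp n).1 (sp n).2
                then dupApply A B (midCfg σ c0 (sp n)) (dm n) else none) = some c := hc
            by_cases ht : A.trans c0.qa (sp n).1 (sp n).2
            · rw [if_pos ht] at hc'
              have := (dupApply_spec A B (dm n) _ _ hc').1
              rw [this]
              rfl
            · rw [if_neg ht] at hc'
              exact absurd hc' (by simp)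
  have hlegal : SpLegal A B σ sp dm := by
    intro n c hc
    rw [hqa n c hc]
    exact hρt n
  obtain ⟨hdef, hwin⟩ := hws sp dm hconsist hlegal
  rcases hwin.2 with ⟨N, hN⟩ | ⟨hconsume, haccB⟩
  · obtain ⟨m, hm, hacc⟩ := hρa (N+1)
    have h1 : (sp (m-1)).2 = ρ m := by
      have : m - 1 + 1 = m := by omega
      show ρ (m-1+1) = ρ m
      rw [this]
    exact absurd (h1 ▸ hacc) (hN (m-1) (by omega))
  · exact main_exists A B σ w sp dm (fun i => rfl) hdef hconsume haccB
end
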